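/- Let w_k(n) be the number of unordered rooted binary trees of size n whose largest caterpillar subtree has size at most k (k ≥ 2), and W_k(x) = Σ_n w_k(n) x^n. Then W_k satisfies the functional equation W_k(x) = x + (1/2)W_k(x)^2 + (1/2)W_k(x^2) − x^{k+1} as formal power series. -/

import Mathlib

/-- Ordered rooted binary trees: a tree is a leaf or an internal node with two ordered children. -/
inductive BTree where
  | leaf : BTree
  | node : BTree → BTree → BTree

/-- Size of a tree = number of leaves. -/
def BTree.size : BTree → ℕ
  | .leaf => 1
  | .node l r => l.size + r.size

/-- A tree is a caterpillar if every internal node has at least one leaf child. -/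
def BTree.isCaterpillar : BTree → Prop
  | .leaf => True
  | .node l r => (l = .leaf ∨ r = .leaf) ∧ l.isCaterpillar ∧ r.isCaterpillar

/-- The list of all subtrees (rooted at some node) of a tree. -/
def BTree.subtrees : BTree → List BTree
  | .leaf => [.leaf]
  | .node l r => .node l r :: (l.subtrees ++ r.subtrees)

/-- γ(t): the size of the biggest caterpillar subtree of `t`. -/
noncomputable def BTree.gamma (t : BTree) : ℕ :=
  sSup {m | ∃ s ∈ t.subtrees, s.isCaterpillar ∧ s.size = m}

/-- `fcount k n`: number of ordered rooted binary trees of size `n` with γ ≤ k. -/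
noncomputable def fcount (k n : ℕ) : ℕ :=
  Nat.card {t : BTree // t.size = n ∧ t.gamma ≤ k}

/-- Two ordered trees represent the same unordered rooted binary tree: at each internal
node the two children may be exchanged. -/
inductive TEquiv : BTree → BTree → Prop
  | leaf : TEquiv .leaf .leaf
  | node {l l' r r'} : TEquiv l l' → TEquiv r r' → TEquiv (.node l r) (.node l' r')
  | swap {l l' r r'} : TEquiv l r' → TEquiv r l' → TEquiv (.node l r) (.node l' r')

/-- `wcount k n`: the number of unordered rooted binary trees (equivalence classes of
ordered trees under exchanging children) of size `n` whose largest caterpillar subtree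
has size at most `k`. -/
noncomputable def wcount (k n : ℕ) : ℕ :=
  Nat.card {q : Quot TEquiv // ∃ t : BTree, Quot.mk TEquiv t = q ∧ t.size = n ∧ t.gamma ≤ k}



deriving instance DecidableEq for BTree

namespace BTree

lemma one_le_size (t : BTree) : 1 ≤ t.size := by
  induction t with
  | leaf => simp [size]
  | node l r ih ih' => simp [size]; omega

def isCat : BTree → Bool
  | .leaf => true
  | .node l r => (l == .leaf || r == .leaf) && l.isCat && r.isCat

lemma isCat_iff (t : BTree) : t.isCat = true ↔ t.isCaterpillar := by
  induction t with
  | leaf => simp [isCat, isCaterpillar]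
  | node l r ihl ihr =>
    simp [isCat, isCaterpillar, ihl, ihr, Bool.and_eq_true, Bool.or_eq_true, beq_iff_eq,
      and_assoc]

def g : BTree → ℕ
  | .leaf => 1
  | .node l r => if (BTree.node l r).isCat then l.size + r.size else max l.g r.g

lemma g_le_size (t : BTree) : t.g ≤ t.size := by
  induction t with
  | leaf => simp [g, size]
  | node l r ihl ihr =>
    simp only [g, size]
    split
    · exact le_refl _
    · have := l.one_le_size; have := r.one_le_size; omega

lemma g_of_cat {t : BTree} (h : t.isCaterpillar) : t.g = t.size := by
  cases t with
  | leaf => rfl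
  | node l r => simp [g, (isCat_iff _).2 h, size]

lemma leaf_mem_subtrees (t : BTree) : BTree.leaf ∈ t.subtrees := by
  induction t with
  | leaf => simp [subtrees]
  | node l r ihl ihr => simp [subtrees]; tauto

lemma g_mem (t : BTree) : ∃ s ∈ t.subtrees, s.isCaterpillar ∧ s.size = t.g := by
  induction t with
  | leaf => exact ⟨.leaf, by simp [subtrees], trivial, rfl⟩
  | node l r ihl ihr =>
    by_cases h : (BTree.node l r).isCat
    · exact ⟨.node l r, by simp [subtrees], (isCat_iff _).1 h, by simp [g, h, size]⟩
    · obtain ⟨sl, hsl, hcl, hel⟩ := ihl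
      obtain ⟨sr, hsr, hcr, her⟩ := ihr
      rcases le_total l.g r.g with hle | hle
      · exact ⟨sr, by simp [subtrees]; tauto, hcr, by simp [g, h]; omega⟩
      · exact ⟨sl, by simp [subtrees]; tauto, hcl, by simp [g, h]; omega⟩

lemma g_ub (t : BTree) : ∀ s ∈ t.subtrees, s.isCaterpillar → s.size ≤ t.g := by
  induction t with
  | leaf =>
    intro s hs hc
    simp [subtrees] at hs
    subst hs; simp [size, g]
  | node l r ihl ihr =>
    intro s hs hc
    have hgl : l.g ≤ (BTree.node l r).g := by
      simp only [g]; split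
      · calc l.g ≤ l.size := g_le_size l
          _ ≤ l.size + r.size := Nat.le_add_right _ _
      · exact le_max_left _ _
    have hgr : r.g ≤ (BTree.node l r).g := by
      simp only [g]; split
      · calc r.g ≤ r.size := g_le_size r
          _ ≤ l.size + r.size := Nat.le_add_left _ _
      · exact le_max_right _ _
    simp only [subtrees, List.mem_cons, List.mem_append] at hs
    rcases hs with rfl | hs | hs
    · simp [g, (isCat_iff _).2 hc, size]
    · exact le_trans (ihl s hs hc) hgl
    · exact le_trans (ihr s hs hc) hgr

lemma size_le_of_mem_subtrees {s t : BTree} (h : s ∈ t.subtrees) : s.size ≤ t.size := by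
  induction t with
  | leaf => simp [subtrees] at h; subst h; rfl
  | node l r ihl ihr =>
    simp only [subtrees, List.mem_cons, List.mem_append] at h
    have := l.one_le_size; have := r.one_le_size
    rcases h with rfl | h | h
    · rfl
    · have := ihl h; simp [size]; omega
    · have := ihr h; simp [size]; omega

lemma gamma_eq_g (t : BTree) : t.gamma = t.g := by
  obtain ⟨s, hs, hc, he⟩ := g_mem t
  have hbdd : BddAbove {m | ∃ s ∈ t.subtrees, s.isCaterpillar ∧ s.size = m} := by
    refine ⟨t.size, ?_⟩
    rintro m ⟨s', hs', hc', rfl⟩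
    exact size_le_of_mem_subtrees hs'
  have hmem : t.g ∈ {m | ∃ s ∈ t.subtrees, s.isCaterpillar ∧ s.size = m} := ⟨s, hs, hc, he⟩
  unfold gamma
  apply le_antisymm
  · refine csSup_le ⟨t.g, hmem⟩ ?_
    rintro m ⟨s', hs', hc', rfl⟩
    exact g_ub t s' hs' hc'
  · exact le_csSup hbdd hmem

end BTree

namespace BTree

def enc : BTree → ℕ
  | .leaf => 0
  | .node l r => Nat.pair l.enc r.enc + 1

lemma enc_inj : ∀ {t s : BTree}, t.enc = s.enc → t = s := by
  intro t
  induction t with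
  | leaf =>
    intro s h
    cases s with
    | leaf => rfl
    | node l r => simp [enc] at h
  | node l r ihl ihr =>
    intro s h
    cases s with
    | leaf => simp [enc] at h
    | node l' r' =>
      simp only [enc, Nat.add_right_cancel_iff] at h
      have h1 := congrArg Nat.unpair h
      simp [Nat.unpair_pair] at h1
      rw [ihl h1.1, ihr h1.2]

lemma enc_eq_zero {t : BTree} (h : t.enc = 0) : t = .leaf := enc_inj h

def canon : BTree → BTree
  | .leaf => .leaf
  | .node l r =>
      if l.canon.enc ≤ r.canon.enc then .node l.canon r.canon else .node r.canon l.canon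

lemma sortpair_comm (a b : BTree) :
    (if a.enc ≤ b.enc then BTree.node a b else BTree.node b a) =
    (if b.enc ≤ a.enc then BTree.node b a else BTree.node a b) := by
  rcases lt_trichotomy a.enc b.enc with h | h | h
  · rw [if_pos h.le, if_neg (by omega)]
  · rw [if_pos h.le, if_pos h.ge, enc_inj h]
  · rw [if_neg (by omega), if_pos h.le]

lemma equiv_refl (t : BTree) : TEquiv t t := by
  induction t with
  | leaf => exact .leaf
  | node l r ihl ihr => exact .node ihl ihr

lemma equiv_symm {t s : BTree} (h : TEquiv t s) : TEquiv s t := by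
  induction h with
  | leaf => exact .leaf
  | node h1 h2 ih1 ih2 => exact .node ih1 ih2
  | swap h1 h2 ih1 ih2 => exact .swap ih2 ih1

lemma equiv_trans {t s u : BTree} (h : TEquiv t s) (h' : TEquiv s u) : TEquiv t u := by
  induction h generalizing u with
  | leaf => exact h'
  | @node l l' r r' h1 h2 ih1 ih2 =>
    cases h' with
    | node g1 g2 => exact .node (ih1 g1) (ih2 g2)
    | swap g1 g2 => exact .swap (ih1 g1) (ih2 g2)
  | @swap l l' r r' h1 h2 ih1 ih2 =>
    cases h' with
    | node g1 g2 => exact .swap (ih1 g2) (ih2 g1)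
    | swap g1 g2 => exact .node (ih1 g2) (ih2 g1)

lemma equiv_canon (t : BTree) : TEquiv t t.canon := by
  induction t with
  | leaf => exact .leaf
  | node l r ihl ihr =>
    simp only [canon]
    split
    · exact .node ihl ihr
    · exact .swap ihl ihr

lemma canon_eq_of_equiv {t s : BTree} (h : TEquiv t s) : t.canon = s.canon := by
  induction h with
  | leaf => rfl
  | node h1 h2 ih1 ih2 => simp only [canon, ih1, ih2]
  | @swap l l' r r' h1 h2 ih1 ih2 =>
    show (if l.canon.enc ≤ r.canon.enc then BTree.node l.canon r.canon
          else BTree.node r.canon l.canon) = _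
    rw [ih1, ih2, sortpair_comm]
    rfl

lemma equiv_iff_canon_eq {t s : BTree} : TEquiv t s ↔ t.canon = s.canon := by
  constructor
  · exact canon_eq_of_equiv
  · intro h
    exact equiv_trans (h ▸ equiv_canon t) (equiv_symm (equiv_canon s))

lemma canon_canon (t : BTree) : t.canon.canon = t.canon :=
  canon_eq_of_equiv (equiv_symm (equiv_canon t))

lemma size_eq_of_equiv {t s : BTree} (h : TEquiv t s) : t.size = s.size := by
  induction h with
  | leaf => rfl
  | node h1 h2 ih1 ih2 => simp [size, ih1, ih2]
  | swap h1 h2 ih1 ih2 => simp [size, ih1, ih2]; omega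

lemma eq_leaf_iff_of_equiv {t s : BTree} (h : TEquiv t s) : t = .leaf ↔ s = .leaf := by
  cases h with
  | leaf => simp
  | node h1 h2 => simp
  | swap h1 h2 => simp

lemma cat_iff_of_equiv {t s : BTree} (h : TEquiv t s) : t.isCaterpillar ↔ s.isCaterpillar := by
  induction h with
  | leaf => simp
  | node h1 h2 ih1 ih2 =>
    simp only [isCaterpillar, eq_leaf_iff_of_equiv h1, eq_leaf_iff_of_equiv h2, ih1, ih2]
  | swap h1 h2 ih1 ih2 =>
    simp only [isCaterpillar, eq_leaf_iff_of_equiv h1, eq_leaf_iff_of_equiv h2, ih1, ih2]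
    tauto

lemma g_eq_of_equiv {t s : BTree} (h : TEquiv t s) : t.g = s.g := by
  induction h with
  | leaf => rfl
  | @node l l' r r' h1 h2 ih1 ih2 =>
    have hcat : (BTree.node l r).isCaterpillar ↔ (BTree.node l' r').isCaterpillar :=
      cat_iff_of_equiv (.node h1 h2)
    simp only [g]
    by_cases hc : (BTree.node l r).isCat
    · rw [if_pos hc, if_pos (by rw [isCat_iff] at *; tauto),
        size_eq_of_equiv h1, size_eq_of_equiv h2]
    · rw [if_neg hc, if_neg (by rw [isCat_iff] at *; tauto), ih1, ih2]
  | @swap l l' r r' h1 h2 ih1 ih2 =>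
    have hcat : (BTree.node l r).isCaterpillar ↔ (BTree.node l' r').isCaterpillar :=
      cat_iff_of_equiv (.swap h1 h2)
    simp only [g]
    by_cases hc : (BTree.node l r).isCat
    · rw [if_pos hc, if_pos (by rw [isCat_iff] at *; tauto),
        size_eq_of_equiv h1, size_eq_of_equiv h2]
      omega
    · rw [if_neg hc, if_neg (by rw [isCat_iff] at *; tauto), ih1, ih2, Nat.max_comm]

lemma canon_node_iff {l r : BTree} :
    (BTree.node l r).canon = BTree.node l r ↔
      l.canon = l ∧ r.canon = r ∧ l.enc ≤ r.enc := by
  constructor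
  · intro h
    simp only [canon] at h
    by_cases hle : l.canon.enc ≤ r.canon.enc
    · rw [if_pos hle] at h
      injection h with h1 h2
      exact ⟨h1, h2, by rw [h1, h2] at hle; exact hle⟩
    · rw [if_neg hle] at h
      injection h with h1 h2
      have heq : l = r := by
        have := canon_canon l
        rw [h2, h1] at this
        exact this
      rw [heq] at hle
      exact absurd le_rfl hle
  · rintro ⟨h1, h2, h3⟩
    simp only [canon, h1, h2, if_pos h3]

end BTree

namespace BTree

lemma finite_size_le (n : ℕ) : {t : BTree | t.size ≤ n}.Finite := by
  induction n with
  | zero =>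
    convert Set.finite_empty
    ext t
    have := t.one_le_size
    simp only [Set.mem_setOf_eq, Set.mem_empty_iff_false, iff_false]
    omega
  | succ n ih =>
    apply Set.Finite.subset (((Set.finite_singleton BTree.leaf).union
      (Set.Finite.image2 BTree.node ih ih)))
    intro t ht
    simp only [Set.mem_setOf_eq] at ht
    cases t with
    | leaf => left; rfl
    | node l r =>
      right
      have := l.one_le_size; have := r.one_le_size
      simp only [size] at ht
      exact Set.mem_image2_of_mem (by simp only [Set.mem_setOf_eq]; omega)
        (by simp only [Set.mem_setOf_eq]; omega)

noncomputable def Sf (k n : ℕ) : Finset BTree :=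
  ((finite_size_le n).toFinset).filter fun t => t.canon = t ∧ t.size = n ∧ t.g ≤ k

lemma mem_Sf {k n : ℕ} {t : BTree} :
    t ∈ Sf k n ↔ t.canon = t ∧ t.size = n ∧ t.g ≤ k := by
  simp only [Sf, Finset.mem_filter, Set.Finite.mem_toFinset, Set.mem_setOf_eq]
  constructor
  · tauto
  · intro h; exact ⟨h.2.1.le, h⟩

lemma canon_eq_of_mk_eq {t t' : BTree} (h : Quot.mk TEquiv t = Quot.mk TEquiv t') :
    t.canon = t'.canon :=
  congrArg (Quot.lift canon fun _ _ h => canon_eq_of_equiv h) h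

lemma wcount_eq (k n : ℕ) : wcount k n = (Sf k n).card := by
  rw [wcount, ← Nat.card_eq_finsetCard]
  apply Nat.card_congr
  apply Equiv.symm
  apply Equiv.ofBijective
    (fun t : {t : BTree // t ∈ Sf k n} =>
      (⟨Quot.mk TEquiv t.1, t.1, rfl, (mem_Sf.1 t.2).2.1, by
        rw [gamma_eq_g]; exact (mem_Sf.1 t.2).2.2⟩ :
        {q : Quot TEquiv // ∃ t : BTree, Quot.mk TEquiv t = q ∧ t.size = n ∧ t.gamma ≤ k}))
  constructor
  · rintro ⟨t, ht⟩ ⟨t', ht'⟩ h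
    simp only [Subtype.mk.injEq] at h
    have := canon_eq_of_mk_eq h
    rw [(mem_Sf.1 ht).1, (mem_Sf.1 ht').1] at this
    exact Subtype.ext this
  · rintro ⟨q, t, hq, hsize, hgamma⟩
    refine ⟨⟨t.canon, mem_Sf.2 ⟨canon_canon t, ?_, ?_⟩⟩, ?_⟩
    · rw [← size_eq_of_equiv (equiv_canon t), hsize]
    · rw [← g_eq_of_equiv (equiv_canon t), ← gamma_eq_g]; exact hgamma
    · apply Subtype.ext
      show Quot.mk TEquiv t.canon = q
      rw [← hq]
      exact Quot.sound (equiv_symm (equiv_canon t))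

end BTree

namespace BTree

lemma g_left_le (l r : BTree) : l.g ≤ (BTree.node l r).g := by
  simp only [g]; split
  · calc l.g ≤ l.size := g_le_size l
      _ ≤ l.size + r.size := Nat.le_add_right _ _
  · exact le_max_left _ _

lemma g_right_le (l r : BTree) : r.g ≤ (BTree.node l r).g := by
  simp only [g]; split
  · calc r.g ≤ r.size := g_le_size r
      _ ≤ l.size + r.size := Nat.le_add_left _ _
  · exact le_max_right _ _

def spine : ℕ → BTree
  | 0 => .leaf
  | 1 => .leaf
  | (m+2) => .node .leaf (spine (m+1))

lemma spine_size : ∀ m, (spine (m+1)).size = m + 1 := by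
  intro m
  induction m with
  | zero => rfl
  | succ m ih => simp only [spine, size, ih]; omega

lemma spine_cat : ∀ m, (spine m).isCaterpillar := by
  intro m
  induction m with
  | zero => trivial
  | succ m ih =>
    cases m with
    | zero => trivial
    | succ m => exact ⟨Or.inl rfl, trivial, ih⟩

lemma spine_canon : ∀ m, (spine m).canon = spine m := by
  intro m
  induction m with
  | zero => rfl
  | succ m ih =>
    cases m with
    | zero => rfl
    | succ m =>
      show (BTree.node .leaf (spine (m+1))).canon = _
      simp only [canon, ih]
      rw [if_pos (by simp [enc])]
      rfl

lemma cat_canonical_eq_spine {t : BTree} (hc : t.isCaterpillar) (hcanon : t.canon = t) :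
    t = spine t.size := by
  induction t with
  | leaf => rfl
  | node l r ihl ihr =>
    obtain ⟨hlr, hcl, hcr⟩ := hc
    obtain ⟨h1, h2, h3⟩ := canon_node_iff.1 hcanon
    rcases hlr with rfl | rfl
    · have hr := ihr hcr h2
      have h1r := r.one_le_size
      obtain ⟨m, hm⟩ : ∃ m, r.size = m + 1 := ⟨r.size - 1, by omega⟩
      have : (BTree.node BTree.leaf r).size = m + 2 := by simp [size, hm]; omega
      rw [this]
      show _ = BTree.node .leaf (spine (m+1))
      rw [hr, hm]
    · have hl : l = .leaf := enc_eq_zero (by simpa [enc] using h3)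
      subst hl
      rfl

noncomputable def Qf (k n : ℕ) : Finset (BTree × BTree) :=
  ((finite_size_le n).toFinset ×ˢ (finite_size_le n).toFinset).filter
    fun p => p.1.canon = p.1 ∧ p.2.canon = p.2 ∧ p.1.g ≤ k ∧ p.2.g ≤ k ∧
      p.1.size + p.2.size = n

lemma mem_Qf {k n : ℕ} {p : BTree × BTree} :
    p ∈ Qf k n ↔ p.1.canon = p.1 ∧ p.2.canon = p.2 ∧ p.1.g ≤ k ∧ p.2.g ≤ k ∧
      p.1.size + p.2.size = n := by
  simp only [Qf, Finset.mem_filter, Finset.mem_product, Set.Finite.mem_toFinset,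
    Set.mem_setOf_eq]
  constructor
  · tauto
  · intro h
    have := p.1.one_le_size; have := p.2.one_le_size
    exact ⟨⟨by omega, by omega⟩, h⟩

lemma Qf_eq_biUnion (k n : ℕ) :
    Qf k n = (Finset.HasAntidiagonal.antidiagonal n).biUnion fun p => Sf k p.1 ×ˢ Sf k p.2 := by
  ext ⟨l, r⟩
  simp only [mem_Qf, Finset.mem_biUnion, Finset.HasAntidiagonal.mem_antidiagonal, Finset.mem_product, mem_Sf]
  constructor
  · rintro ⟨h1, h2, h3, h4, h5⟩
    exact ⟨(l.size, r.size), h5, ⟨h1, rfl, h3⟩, ⟨h2, rfl, h4⟩⟩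
  · rintro ⟨⟨i, j⟩, hij, ⟨h1, rfl, h3⟩, ⟨h2, rfl, h4⟩⟩
    exact ⟨h1, h2, h3, h4, hij⟩

lemma Qf_card (k n : ℕ) :
    (Qf k n).card = ∑ p ∈ Finset.HasAntidiagonal.antidiagonal n, (Sf k p.1).card * (Sf k p.2).card := by
  rw [Qf_eq_biUnion, Finset.card_biUnion]
  · exact Finset.sum_congr rfl fun p _ => Finset.card_product _ _
  · rintro ⟨i, j⟩ hij ⟨i', j'⟩ hij' hne
    simp only [Finset.disjoint_left, Finset.mem_product, mem_Sf]
    rintro ⟨l, r⟩ ⟨⟨_, rfl, _⟩, ⟨_, rfl, _⟩⟩ ⟨⟨_, h1, _⟩, ⟨_, h2, _⟩⟩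
    exact hne (by rw [Prod.mk.injEq]; omega)

noncomputable def Pf (k n : ℕ) : Finset (BTree × BTree) :=
  (Qf k n).filter fun p => p.1.enc ≤ p.2.enc

noncomputable def Df (k n : ℕ) : Finset (BTree × BTree) :=
  (Qf k n).filter fun p => p.1 = p.2

lemma two_mul_Pf_card (k n : ℕ) :
    2 * (Pf k n).card = (Qf k n).card + (Df k n).card := by
  have hswap : ∀ p : BTree × BTree, p ∈ Qf k n → p.swap ∈ Qf k n := by
    rintro ⟨l, r⟩ h
    rw [mem_Qf] at h
    obtain ⟨h1, h2, h3, h4, h5⟩ := h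
    rw [Prod.swap_prod_mk, mem_Qf]
    have h5' : l.size + r.size = n := h5
    exact ⟨h2, h1, h4, h3, show r.size + l.size = n by omega⟩
  set Pf' : Finset (BTree × BTree) := (Qf k n).filter (fun p => p.2.enc ≤ p.1.enc) with hPf'
  have hcard : (Pf k n).card = Pf'.card := by
    apply Finset.card_bij (fun p _ => p.swap)
    · rintro ⟨l, r⟩ hp
      simp only [Pf, Finset.mem_filter] at hp
      simp only [hPf', Finset.mem_filter]
      exact ⟨hswap _ hp.1, hp.2⟩
    · rintro ⟨l, r⟩ _ ⟨l', r'⟩ _ h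
      simpa [Prod.ext_iff, and_comm] using h
    · rintro ⟨l, r⟩ hp
      simp only [hPf', Finset.mem_filter] at hp
      refine ⟨(r, l), ?_, rfl⟩
      simp only [Pf, Finset.mem_filter]
      exact ⟨hswap _ hp.1, hp.2⟩
  have hunion : Pf k n ∪ Pf' = Qf k n := by
    ext p
    simp only [Pf, hPf', Finset.mem_union, Finset.mem_filter]
    constructor
    · tauto
    · intro h
      rcases le_total p.1.enc p.2.enc with hle | hle
      · exact Or.inl ⟨h, hle⟩
      · exact Or.inr ⟨h, hle⟩
  have hinter : Pf k n ∩ Pf' = Df k n := by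
    ext ⟨a, b⟩
    simp only [Pf, hPf', Df, Finset.mem_inter, Finset.mem_filter]
    constructor
    · rintro ⟨⟨h1, h2⟩, ⟨_, h3⟩⟩
      exact ⟨h1, enc_inj (le_antisymm h2 h3)⟩
    · rintro ⟨h1, h2⟩
      obtain rfl : a = b := h2
      exact ⟨⟨h1, le_rfl⟩, h1, le_rfl⟩
  have := Finset.card_union_add_card_inter (Pf k n) Pf'
  rw [hunion, hinter] at this
  omega

lemma Df_card (k n : ℕ) :
    (Df k n).card = if Even n then (Sf k (n / 2)).card else 0 := by
  by_cases h : Even n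
  · rw [if_pos h]
    obtain ⟨m, rfl⟩ := h
    have h2 : (m + m) / 2 = m := by omega
    rw [h2]
    apply Finset.card_nbij' (fun p => p.1) (fun t => (t, t))
    · rintro ⟨l, r⟩ hp
      simp only [Df, Finset.mem_coe, Finset.mem_filter, mem_Qf] at hp
      obtain ⟨⟨h1, _, h3, _, h5⟩, h6⟩ := hp
      obtain rfl : l = r := h6
      have h5' : l.size + l.size = m + m := h5
      rw [Finset.mem_coe, mem_Sf]
      exact ⟨h1, show l.size = m by omega, h3⟩
    · intro t ht
      rw [Finset.mem_coe, mem_Sf] at ht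
      simp only [Df, Finset.mem_coe, Finset.mem_filter, mem_Qf]
      have h1 : t.size = m := ht.2.1
      exact ⟨⟨ht.1, ht.1, ht.2.2, ht.2.2, show t.size + t.size = m + m by omega⟩, trivial⟩
    · rintro ⟨l, r⟩ hp
      simp only [Df, Finset.mem_coe, Finset.mem_filter] at hp
      obtain rfl : l = r := hp.2
      rfl
    · intro t ht; rfl
  · rw [if_neg h, Finset.card_eq_zero]
    ext ⟨l, r⟩
    simp only [Df, Finset.mem_filter, mem_Qf, Finset.notMem_empty, iff_false, not_and]
    rintro ⟨_, _, _, _, h5⟩ h6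
    obtain rfl : l = r := h6
    have h5' : l.size + l.size = n := h5
    exact h ⟨l.size, by omega⟩

end BTree

namespace BTree

lemma g_node_eq (l r : BTree) :
    (BTree.node l r).g = if (BTree.node l r).isCat then l.size + r.size
      else max l.g r.g := rfl

lemma g_node_pos {l r : BTree} (h : (BTree.node l r).isCaterpillar) :
    (BTree.node l r).g = l.size + r.size := by
  rw [g_node_eq, if_pos ((isCat_iff _).2 h)]

lemma g_node_neg {l r : BTree} (h : ¬ (BTree.node l r).isCaterpillar) :
    (BTree.node l r).g = max l.g r.g := by
  rw [g_node_eq, if_neg (fun hb => h ((isCat_iff _).1 hb))]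

lemma Pf_card {k n : ℕ} (hk : 2 ≤ k) (hn : 2 ≤ n) :
    (Pf k n).card = (Sf k n).card + (if n = k + 1 then 1 else 0) := by
  classical
  have hsplit := Finset.card_filter_add_card_filter_not
    (s := Pf k n) (p := fun p => (BTree.node p.1 p.2).g ≤ k)
  set Pg := (Pf k n).filter (fun p => (BTree.node p.1 p.2).g ≤ k) with hPg
  set Pb := (Pf k n).filter (fun p => ¬ (BTree.node p.1 p.2).g ≤ k) with hPb
  have hmemPf : ∀ l r : BTree, (l, r) ∈ Pf k n ↔
      l.canon = l ∧ r.canon = r ∧ l.g ≤ k ∧ r.g ≤ k ∧ l.size + r.size = n ∧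
        l.enc ≤ r.enc := by
    intro l r
    simp only [Pf, Finset.mem_filter, mem_Qf]
    tauto
  have hg : Pg.card = (Sf k n).card := by
    apply Finset.card_nbij (fun p => BTree.node p.1 p.2)
    · rintro ⟨l, r⟩ hp
      simp only [hPg, Finset.mem_coe, Finset.mem_filter, hmemPf] at hp
      obtain ⟨⟨h1, h2, h3, h4, h5, h6⟩, h7⟩ := hp
      rw [Finset.mem_coe, mem_Sf]
      refine ⟨canon_node_iff.2 ⟨h1, h2, h6⟩, ?_, h7⟩
      show l.size + r.size = n
      exact h5
    · rintro ⟨l, r⟩ _ ⟨l', r'⟩ _ h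
      simpa [Prod.ext_iff] using h
    · rintro t ht
      simp only [Finset.mem_coe] at ht
      rw [mem_Sf] at ht
      obtain ⟨h1, h2, h3⟩ := ht
      cases t with
      | leaf => simp [size] at h2; omega
      | node l r =>
        obtain ⟨hc1, hc2, hc3⟩ := canon_node_iff.1 h1
        refine ⟨(l, r), ?_, rfl⟩
        simp only [hPg, Finset.mem_coe, Finset.mem_filter, hmemPf]
        exact ⟨⟨hc1, hc2, le_trans (g_left_le l r) h3, le_trans (g_right_le l r) h3,
          h2, hc3⟩, h3⟩
  have hb : Pb.card = if n = k + 1 then 1 else 0 := by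
    by_cases hcase : n = k + 1
    · rw [if_pos hcase]
      subst hcase
      rw [Finset.card_eq_one]
      refine ⟨(BTree.leaf, spine k), ?_⟩
      ext ⟨l, r⟩
      simp only [hPb, Finset.mem_filter, hmemPf, Finset.mem_singleton, Prod.mk.injEq]
      constructor
      · rintro ⟨⟨h1, h2, h3, h4, h5, h6⟩, h7⟩
        by_cases hcat : (BTree.node l r).isCaterpillar
        · rw [g_node_pos hcat] at h7
          obtain ⟨hlr, hcl, hcr⟩ := hcat
          rcases hlr with rfl | rfl
          · have hlsize : (BTree.leaf : BTree).size = 1 := rfl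
            have hrsize : r.size = k := by omega
            have := cat_canonical_eq_spine hcr h2
            rw [hrsize] at this
            exact ⟨rfl, this⟩
          · have h6' : l.enc ≤ 0 := h6
            have hl : l = .leaf := enc_eq_zero (by omega)
            subst hl
            have hlsize : (BTree.leaf : BTree).size = 1 := rfl
            have hrsize : (BTree.leaf : BTree).size = 1 := rfl
            omega
        · rw [g_node_neg hcat] at h7
          omega
      · rintro ⟨rfl, rfl⟩
        have hsz : (spine k).size = k := by
          obtain ⟨m, rfl⟩ : ∃ m, k = m + 1 := ⟨k - 1, by omega⟩
          exact spine_size m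
        have hcat : (BTree.node BTree.leaf (spine k)).isCaterpillar :=
          ⟨Or.inl rfl, trivial, spine_cat k⟩
        refine ⟨⟨rfl, spine_canon k, ?_, ?_, ?_, by simp [enc]⟩, ?_⟩
        · show (1 : ℕ) ≤ k; omega
        · rw [g_of_cat (spine_cat k), hsz]
        · show 1 + (spine k).size = k + 1
          omega
        · rw [g_node_pos hcat]
          show ¬ ((BTree.leaf : BTree).size + (spine k).size ≤ k)
          have : (BTree.leaf : BTree).size = 1 := rfl
          omega
    · rw [if_neg hcase, Finset.card_eq_zero]
      ext ⟨l, r⟩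
      simp only [hPb, Finset.mem_filter, hmemPf, Finset.notMem_empty, iff_false, not_and]
      rintro ⟨h1, h2, h3, h4, h5, h6⟩ h7
      by_cases hcat : (BTree.node l r).isCaterpillar
      · rw [g_node_pos hcat] at h7
        obtain ⟨hlr, hcl, hcr⟩ := hcat
        have h1l : (BTree.leaf : BTree).size = 1 := rfl
        rcases hlr with rfl | rfl
        · rw [g_of_cat hcr] at h4
          omega
        · rw [g_of_cat hcl] at h3
          omega
      · rw [g_node_neg hcat] at h7
        omega
  omega

lemma Sf_zero (k : ℕ) : (Sf k 0).card = 0 := by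
  rw [Finset.card_eq_zero]
  ext t
  simp only [mem_Sf, Finset.notMem_empty, iff_false, not_and]
  intro _
  have := t.one_le_size
  omega

lemma Sf_one {k : ℕ} (hk : 2 ≤ k) : (Sf k 1).card = 1 := by
  rw [Finset.card_eq_one]
  refine ⟨.leaf, ?_⟩
  ext t
  simp only [mem_Sf, Finset.mem_singleton]
  constructor
  · rintro ⟨h1, h2, h3⟩
    cases t with
    | leaf => rfl
    | node l r =>
      have := l.one_le_size; have := r.one_le_size
      simp only [size] at h2
      omega
  · rintro rfl
    exact ⟨rfl, rfl, by show (1:ℕ) ≤ k; omega⟩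

lemma main_count {k : ℕ} (hk : 2 ≤ k) (n : ℕ) :
    2 * (Sf k n).card + 2 * (if n = k + 1 then 1 else 0) =
      2 * (if n = 1 then 1 else 0) +
      (∑ p ∈ Finset.HasAntidiagonal.antidiagonal n, (Sf k p.1).card * (Sf k p.2).card) +
      (if Even n then (Sf k (n / 2)).card else 0) := by
  rcases Nat.lt_or_ge n 2 with hn | hn
  · interval_cases n
    · rw [Finset.Nat.sum_antidiagonal_eq_sum_range_succ_mk]
      simp [Sf_zero, Finset.sum_range_succ]
    · rw [Finset.Nat.sum_antidiagonal_eq_sum_range_succ_mk]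
      rw [if_pos rfl, if_neg (by omega), if_neg (by simp)]
      simp [Finset.sum_range_succ, Sf_zero, Sf_one hk]
  · have h1 := Pf_card hk hn
    have h2 := two_mul_Pf_card k n
    have h3 := Df_card k n
    have h4 := Qf_card k n
    rw [h4, h3, h1] at h2
    rw [if_neg (show ¬ n = 1 by omega)]
    split_ifs at h2 ⊢ <;> omega

end BTree

/-- The generating function `W_k(x) = Σ_n w_k(n) x^n` satisfies, for `k ≥ 2`, the
functional equation `W_k(x) = x + (1/2)W_k(x)² + (1/2)W_k(x²) − x^{k+1}` as formal
power series (here `W_k(x²)` is the series whose `2n`-th coefficient is `w_k(n)`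
and whose odd coefficients vanish). -/
theorem wgen_functional_equation (k : ℕ) (hk : 2 ≤ k) :
    (PowerSeries.mk fun n => (wcount k n : ℚ)) =
      PowerSeries.X + PowerSeries.C (1 / 2 : ℚ) * (PowerSeries.mk fun n => (wcount k n : ℚ)) ^ 2 +
        PowerSeries.C (1 / 2 : ℚ) *
          (PowerSeries.mk fun n => if Even n then (wcount k (n / 2) : ℚ) else 0) -
        PowerSeries.X ^ (k + 1) := by
  ext n
  have key := BTree.main_count hk n
  simp only [← BTree.wcount_eq] at key
  have key' : 2 * (wcount k n : ℚ) + 2 * (if n = k + 1 then 1 else 0) =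
      2 * (if n = 1 then 1 else 0) +
      (∑ p ∈ Finset.HasAntidiagonal.antidiagonal n, (wcount k p.1 : ℚ) * (wcount k p.2 : ℚ)) +
      (if Even n then (wcount k (n / 2) : ℚ) else 0) := by
    exact_mod_cast key
  rw [map_sub, map_add, map_add, PowerSeries.coeff_C_mul, PowerSeries.coeff_C_mul,
    pow_two, PowerSeries.coeff_mul]
  simp only [PowerSeries.coeff_mk, PowerSeries.coeff_X, PowerSeries.coeff_X_pow]
  linarith [key']
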